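/- Let H be a square-free graph, W = γ₀ γ₁ ⋯ γ_k an nc-walk in H with k ≥ 1, and K the gadget path s v₁ ⋯ v_{k-1} t with pendant u_i pinned to γ_i. Then the number of homomorphisms σ : K → H with σ(u_i) = γ_i for all i, σ(s) = γ₁, and σ(t) = γ_{k-1} equals 1 + Σ_{i=1}^{k-1} (deg(γ_i) − 1). -/
import Mathlib

/-- The candidate homomorphism: `γ(i+1)` before position `j`, `w` at `j`, `γ(i-1)` after. -/
def stmt8Fun {V : Type*} (γ : ℕ → V) (k j : ℕ) (w : V) : Fin (k + 1) → V :=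
  fun i => if (i : ℕ) < j then γ ((i : ℕ) + 1) else if (i : ℕ) = j then w else γ ((i : ℕ) - 1)

theorem stmt8Fun_eval {V : Type*} (γ : ℕ → V) (k j : ℕ) (w : V) (i : Fin (k + 1)) :
    stmt8Fun γ k j w i
      = if (i : ℕ) < j then γ ((i : ℕ) + 1)
        else if (i : ℕ) = j then w else γ ((i : ℕ) - 1) := rfl

/-- For the path gadget on an nc-walk `γ₀ … γ_k` in a square-free graph, the number of
homomorphisms with `σ(s) = γ₁` and `σ(t) = γ_{k-1}` equals `1 + Σ_{i=1}^{k-1} (deg(γ_i) - 1)`. -/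
theorem stmt8 {V : Type*} [Fintype V] [DecidableEq V]
    (H : SimpleGraph V) [DecidableRel H.Adj]
    (hsf : ∀ a b c d : V, a ≠ b → b ≠ c → c ≠ d → d ≠ a → a ≠ c → b ≠ d →
      ¬(H.Adj a b ∧ H.Adj b c ∧ H.Adj c d ∧ H.Adj d a))
    (k : ℕ) (hk : 1 ≤ k)
    (γ : ℕ → V)
    (hwalk : ∀ i < k, H.Adj (γ i) (γ (i + 1)))
    (hnc : ∀ i, 1 ≤ i → i + 1 ≤ k → γ (i - 1) ≠ γ (i + 1)) :
    Set.ncard {σ : Fin (k + 1) → V |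
      (∀ i : ℕ, (h : i < k) →
        H.Adj (σ ⟨i, by omega⟩) (σ ⟨i + 1, by omega⟩)) ∧
      (∀ i : ℕ, 1 ≤ i → (h : i + 1 ≤ k) → H.Adj (σ ⟨i, by omega⟩) (γ i)) ∧
      σ 0 = γ 1 ∧ σ ⟨k, by omega⟩ = γ (k - 1)}
      = 1 + ∑ i ∈ Finset.Icc 1 (k - 1), (H.degree (γ i) - 1) := by
  classical
  rcases eq_or_lt_of_le hk with hk1 | hk2
  · -- case k = 1
    subst hk1
    have hIcc : Finset.Icc 1 (1 - 1) = (∅ : Finset ℕ) := by decide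
    rw [hIcc, Finset.sum_empty]
    have hset : {σ : Fin (1 + 1) → V |
        (∀ i : ℕ, (h : i < 1) →
          H.Adj (σ ⟨i, by omega⟩) (σ ⟨i + 1, by omega⟩)) ∧
        (∀ i : ℕ, 1 ≤ i → (h : i + 1 ≤ 1) → H.Adj (σ ⟨i, by omega⟩) (γ i)) ∧
        σ 0 = γ 1 ∧ σ ⟨1, by omega⟩ = γ (1 - 1)}
        = {fun i : Fin 2 => if (i : ℕ) = 0 then γ 1 else γ 0} := by
      ext σ
      simp only [Set.mem_setOf_eq, Set.mem_singleton_iff]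
      constructor
      · rintro ⟨h1, h2, h3, h4⟩
        funext i
        have hi : (i : ℕ) = 0 ∨ (i : ℕ) = 1 := by omega
        rcases hi with h | h
        · have hi0 : i = (0 : Fin 2) := Fin.ext (by simp [h])
          rw [hi0]; simpa using h3
        · have hi1 : i = (⟨1, by omega⟩ : Fin 2) := Fin.ext (by simp [h])
          rw [hi1]; simpa using h4
      · rintro rfl
        refine ⟨?_, ?_, ?_, ?_⟩
        · intro i hi
          have hi0 : i = 0 := by omega
          subst hi0
          simpa using (hwalk 0 (by omega)).symm
        · intro i hi1 hi2; omega
        · simp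
        · simp
    rw [hset, Set.ncard_singleton]
    omega
  · -- case k ≥ 2
    set T : Finset ((_ : ℕ) × V) :=
      (Finset.Icc 1 (k - 1)).sigma fun j =>
        Finset.univ.filter fun w => H.Adj (γ j) w ∧ (j < k - 1 → w ≠ γ (j + 1)) with hT
    have hmemT : ∀ (j : ℕ) (w : V), (⟨j, w⟩ : (_ : ℕ) × V) ∈ T ↔
        (1 ≤ j ∧ j ≤ k - 1) ∧ H.Adj (γ j) w ∧ (j < k - 1 → w ≠ γ (j + 1)) := by
      intro j w
      simp [hT, Finset.mem_sigma, Finset.mem_Icc, Finset.mem_filter, and_assoc]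
    set g : ((_ : ℕ) × V) → (Fin (k + 1) → V) := fun p => stmt8Fun γ k p.1 p.2 with hg
    -- every parametrized map is a valid homomorphism
    have hfS : ∀ j w, 1 ≤ j → j ≤ k - 1 → H.Adj (γ j) w →
        (∀ i : ℕ, (h : i < k) →
          H.Adj (stmt8Fun γ k j w ⟨i, by omega⟩) (stmt8Fun γ k j w ⟨i + 1, by omega⟩)) ∧
        (∀ i : ℕ, 1 ≤ i → (h : i + 1 ≤ k) → H.Adj (stmt8Fun γ k j w ⟨i, by omega⟩) (γ i)) ∧
        stmt8Fun γ k j w 0 = γ 1 ∧ stmt8Fun γ k j w ⟨k, by omega⟩ = γ (k - 1) := by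
      intro j w hj1 hj2 hw
      refine ⟨?_, ?_, ?_, ?_⟩
      · intro i hi
        rw [stmt8Fun_eval, stmt8Fun_eval]
        simp only
        rcases Nat.lt_trichotomy i j with hij | hij | hij
        · rw [if_pos hij]
          rcases (by omega : i + 1 = j ∨ i + 1 < j) with he | hlt'
          · rw [if_neg (by omega), if_pos he, he]
            exact hw
          · rw [if_pos hlt']
            exact hwalk (i + 1) (by omega)
        · rw [if_neg (by omega), if_pos hij, if_neg (by omega), if_neg (by omega),
            show i + 1 - 1 = i from by omega, hij]
          exact hw.symm
        · rw [if_neg (by omega), if_neg (by omega), if_neg (by omega), if_neg (by omega),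
            show i + 1 - 1 = i from by omega]
          have h := hwalk (i - 1) (by omega)
          rwa [show i - 1 + 1 = i from by omega] at h
      · intro i hi1 hi2
        rw [stmt8Fun_eval]
        simp only
        rcases Nat.lt_trichotomy i j with hij | hij | hij
        · rw [if_pos hij]
          exact (hwalk i (by omega)).symm
        · rw [if_neg (by omega), if_pos hij, hij]
          exact hw.symm
        · rw [if_neg (by omega), if_neg (by omega)]
          have h := hwalk (i - 1) (by omega)
          rwa [show i - 1 + 1 = i from by omega] at h
      · have h0 : (0 : Fin (k + 1)) = ⟨0, by omega⟩ := Fin.ext (by simp)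
        rw [h0, stmt8Fun_eval]
        simp only
        rw [if_pos (by omega : 0 < j)]
      · rw [stmt8Fun_eval]
        simp only
        rw [if_neg (by omega), if_neg (by omega)]
    -- injectivity
    have hinj : Set.InjOn g ↑T := by
      have hcontra : ∀ (a b : ℕ) (u u' : V),
          ((1 ≤ a ∧ a ≤ k - 1) ∧ H.Adj (γ a) u ∧ (a < k - 1 → u ≠ γ (a + 1))) →
          ((1 ≤ b ∧ b ≤ k - 1) ∧ H.Adj (γ b) u' ∧ (b < k - 1 → u' ≠ γ (b + 1))) →
          a < b → stmt8Fun γ k a u ≠ stmt8Fun γ k b u' := by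
        intro a b u u' ha hb hab hfe
        have h := congrFun hfe ⟨a, by omega⟩
        simp [stmt8Fun_eval, hab, lt_irrefl] at h
        exact ha.2.2 (by omega) h
      rintro ⟨j, w⟩ hjw ⟨j', w'⟩ hj'w' heq
      rw [Finset.mem_coe, hmemT] at hjw hj'w'
      have heq' : stmt8Fun γ k j w = stmt8Fun γ k j' w' := heq
      rcases lt_trichotomy j j' with h | h | h
      · exact absurd heq' (hcontra j j' w w' hjw hj'w' h)
      · subst h
        have h2 := congrFun heq' ⟨j, by omega⟩
        simp [stmt8Fun_eval, lt_irrefl] at h2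
        simp [h2]
      · exact absurd heq'.symm (hcontra j' j w' w hj'w' hjw h)
    -- set equality
    have hset : {σ : Fin (k + 1) → V |
        (∀ i : ℕ, (h : i < k) →
          H.Adj (σ ⟨i, by omega⟩) (σ ⟨i + 1, by omega⟩)) ∧
        (∀ i : ℕ, 1 ≤ i → (h : i + 1 ≤ k) → H.Adj (σ ⟨i, by omega⟩) (γ i)) ∧
        σ 0 = γ 1 ∧ σ ⟨k, by omega⟩ = γ (k - 1)} = g '' ↑T := by
      ext σ
      simp only [Set.mem_setOf_eq, Set.mem_image, Finset.mem_coe]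
      constructor
      · rintro ⟨hA, hP, h0, hK⟩
        set σ' : ℕ → V := fun i => σ ⟨min i k, by omega⟩ with hσ'def
        have hσ'eq : ∀ (i : ℕ), i ≤ k → ∀ (h : i < k + 1), σ' i = σ ⟨i, h⟩ := by
          intro i h hh
          exact congrArg σ (Fin.ext (by simpa using min_eq_left h))
        have h0' : σ' 0 = γ 1 := by
          rw [hσ'eq 0 (by omega) (by omega)]
          rw [show (⟨0, by omega⟩ : Fin (k + 1)) = 0 from Fin.ext (by simp)]
          exact h0
        have hk' : σ' k = γ (k - 1) := by
          rw [hσ'eq k le_rfl (by omega)]; exact hK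
        have hadj' : ∀ i < k, H.Adj (σ' i) (σ' (i + 1)) := by
          intro i hi
          rw [hσ'eq i (by omega) (by omega), hσ'eq (i + 1) (by omega) (by omega)]
          exact hA i hi
        have hpend' : ∀ i, 1 ≤ i → i + 1 ≤ k → H.Adj (σ' i) (γ i) := by
          intro i hi1 hi2
          rw [hσ'eq i (by omega) (by omega)]
          exact hP i hi1 hi2
        have hσfun : ∀ i : Fin (k + 1), σ i = σ' (i : ℕ) := by
          intro i
          rw [hσ'eq (i : ℕ) (by omega) (by omega)]
        -- the square-free dichotomy
        have dich : ∀ i < k, σ' i = γ (i + 1) ∨ σ' (i + 1) = γ i := by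
          intro i hi
          by_contra hcon
          push_neg at hcon
          obtain ⟨h1, h2⟩ := hcon
          have hab : H.Adj (γ i) (σ' i) := by
            rcases Nat.eq_zero_or_pos i with rfl | hip
            · rw [h0']; exact hwalk 0 (by omega)
            · exact (hpend' i hip (by omega)).symm
          have hbc := hadj' i hi
          have hcd : H.Adj (σ' (i + 1)) (γ (i + 1)) := by
            rcases (by omega : i + 1 = k ∨ i + 1 < k) with he | hlt
            · rw [he, hk']
              have h := hwalk (k - 1) (by omega)
              rwa [show k - 1 + 1 = k from by omega] at h
            · exact hpend' (i + 1) (by omega) (by omega)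
          have hda := (hwalk i hi).symm
          exact hsf (γ i) (σ' i) (σ' (i + 1)) (γ (i + 1)) (H.ne_of_adj hab)
            (H.ne_of_adj hbc) (H.ne_of_adj hcd) (H.ne_of_adj hda)
            (fun h => h2 h.symm) h1 ⟨hab, hbc, hcd, hda⟩
        by_cases hex : ∃ j, (1 ≤ j ∧ j ≤ k - 1) ∧ σ' j ≠ γ (j + 1)
        · -- deviation exists: take the least one
          obtain ⟨⟨hj1, hj2⟩, hjne⟩ := Nat.find_spec hex
          set j := Nat.find hex with hjdef
          have hmin : ∀ m, m < j → ¬((1 ≤ m ∧ m ≤ k - 1) ∧ σ' m ≠ γ (m + 1)) :=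
            fun m hm => Nat.find_min hex hm
          have pref : ∀ i, i < j → σ' i = γ (i + 1) := by
            intro i hij
            rcases Nat.eq_zero_or_pos i with rfl | hip
            · exact h0'
            · by_contra hne
              exact hmin i hij ⟨⟨hip, by omega⟩, hne⟩
          have hstep : σ' (j + 1) = γ j := (dich j (by omega)).resolve_left hjne
          have post : ∀ d, j + 1 + d ≤ k → σ' (j + 1 + d) = γ (j + d) := by
            intro d
            induction d with
            | zero => intro _; simpa using hstep
            | succ d ih =>
              intro hd
              have ihv := ih (by omega)
              rcases dich (j + 1 + d) (by omega) with h | h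
              · exfalso
                apply hnc (j + d + 1) (by omega) (by omega)
                rw [show j + d + 1 - 1 = j + d from by omega,
                  show j + d + 1 + 1 = j + 1 + d + 1 from by omega]
                exact ihv.symm.trans h
              · rw [show j + 1 + (d + 1) = j + 1 + d + 1 from by omega, h,
                  show j + (d + 1) = j + 1 + d from by omega]
          refine ⟨⟨j, σ' j⟩, ?_, ?_⟩
          · rw [hmemT]
            exact ⟨⟨hj1, hj2⟩, (hpend' j hj1 (by omega)).symm, fun _ => hjne⟩
          · funext i
            show stmt8Fun γ k j (σ' j) i = σ i
            rw [hσfun i, stmt8Fun_eval]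
            have him : (i : ℕ) < k + 1 := i.isLt
            rcases Nat.lt_trichotomy (i : ℕ) j with hij | hij | hij
            · rw [if_pos hij]
              exact (pref _ hij).symm
            · rw [if_neg (by omega), if_pos hij, hij]
            · rw [if_neg (by omega), if_neg (by omega)]
              have hpost := post ((i : ℕ) - (j + 1)) (by omega)
              rw [show j + 1 + ((i : ℕ) - (j + 1)) = (i : ℕ) from by omega,
                show j + ((i : ℕ) - (j + 1)) = (i : ℕ) - 1 from by omega] at hpost
              exact hpost.symm
        · -- no deviation
          push_neg at hex
          refine ⟨⟨k - 1, γ k⟩, ?_, ?_⟩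
          · rw [hmemT]
            refine ⟨⟨by omega, le_rfl⟩, ?_, ?_⟩
            · have h := hwalk (k - 1) (by omega)
              rwa [show k - 1 + 1 = k from by omega] at h
            · intro h; omega
          · funext i
            show stmt8Fun γ k (k - 1) (γ k) i = σ i
            rw [hσfun i, stmt8Fun_eval]
            have him : (i : ℕ) < k + 1 := i.isLt
            rcases Nat.lt_trichotomy (i : ℕ) (k - 1) with hij | hij | hij
            · rw [if_pos hij]
              rcases Nat.eq_zero_or_pos (i : ℕ) with hz | hmp
              · rw [hz]; exact h0'.symm
              · exact (hex _ ⟨hmp, by omega⟩).symm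
            · rw [if_neg (by omega), if_pos hij, hij]
              have h := hex (k - 1) ⟨by omega, le_rfl⟩
              rw [show k - 1 + 1 = k from by omega] at h
              exact h.symm
            · rw [if_neg (by omega), if_neg (by omega), show (i : ℕ) = k from by omega]
              exact hk'.symm
      · rintro ⟨⟨j, w⟩, hpT, rfl⟩
        rw [hmemT] at hpT
        exact hfS j w hpT.1.1 hpT.1.2 hpT.2.1
    rw [hset, Set.ncard_image_of_injOn hinj, Set.ncard_coe_finset]
    -- count T
    rw [hT, Finset.card_sigma]
    have hcard : ∀ j ∈ Finset.Icc 1 (k - 1),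
        (Finset.univ.filter fun w => H.Adj (γ j) w ∧ (j < k - 1 → w ≠ γ (j + 1))).card
          = (H.degree (γ j) - 1) + (if j = k - 1 then 1 else 0) := by
      intro j hj
      rw [Finset.mem_Icc] at hj
      by_cases hjk : j < k - 1
      · have hfe : (Finset.univ.filter fun w => H.Adj (γ j) w ∧ (j < k - 1 → w ≠ γ (j + 1)))
            = (H.neighborFinset (γ j)).erase (γ (j + 1)) := by
          ext w
          simp only [Finset.mem_filter, Finset.mem_univ, true_and, Finset.mem_erase,
            SimpleGraph.mem_neighborFinset]
          constructor
          · rintro ⟨ha, hb⟩; exact ⟨hb hjk, ha⟩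
          · rintro ⟨ha, hb⟩; exact ⟨hb, fun _ => ha⟩
        rw [hfe, Finset.card_erase_of_mem (by
          rw [SimpleGraph.mem_neighborFinset]; exact hwalk j (by omega)),
          SimpleGraph.card_neighborFinset_eq_degree, if_neg (by omega)]
        omega
      · have hj' : j = k - 1 := by omega
        have hfe : (Finset.univ.filter fun w => H.Adj (γ j) w ∧ (j < k - 1 → w ≠ γ (j + 1)))
            = H.neighborFinset (γ j) := by
          ext w
          simp only [Finset.mem_filter, Finset.mem_univ, true_and,
            SimpleGraph.mem_neighborFinset]
          exact ⟨fun h => h.1, fun h => ⟨h, fun hc => absurd hc hjk⟩⟩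
        rw [hfe, SimpleGraph.card_neighborFinset_eq_degree, if_pos hj']
        have hdeg : 0 < H.degree (γ j) := by
          rw [← SimpleGraph.card_neighborFinset_eq_degree]
          exact Finset.card_pos.2 ⟨γ (j + 1), by
            rw [SimpleGraph.mem_neighborFinset]; exact hwalk j (by omega)⟩
        omega
    rw [Finset.sum_congr rfl hcard, Finset.sum_add_distrib,
      Finset.sum_ite_eq' (Finset.Icc 1 (k - 1)) (k - 1) (fun _ => 1),
      if_pos (Finset.mem_Icc.2 ⟨by omega, le_rfl⟩), Nat.add_comm]
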